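/- Let G = (V,E) be a finite simple undirected graph with positive edge weights and unique shortest paths, let s, v, t be vertices with d_G(v,t) ≤ d_G(v,s), and let f ∈ E be an edge lying on the unique shortest path π(s,v) such that s and v are connected in G − f. Then d_{G−f}(s,t) + d_{G−f}(v,t) ≤ 5 · d_{G−f}(s,v). (This is the mathematical core of Lemma 3.1 / Theorem 1: the distance estimate returned via the vertex t nearest to v has multiplicative stretch at most 5.) -/

import Mathlib

open scoped ENNReal

variable {V : Type*}

/-- The total weight of a walk: the sum of the weights of its edges (in `ℝ≥0∞`). -/
noncomputable def walkWeight {G : SimpleGraph V} (wt : Sym2 V → NNReal)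
    {u v : V} (p : G.Walk u v) : ℝ≥0∞ :=
  (p.edges.map (fun e => (wt e : ℝ≥0∞))).sum

/-- The weighted shortest-path distance: the infimum over all walks from `u` to `v`
of their total weight (in `ℝ≥0∞`, so it is `∞` if `u` and `v` are not connected). -/
noncomputable def wdist (G : SimpleGraph V) (wt : Sym2 V → NNReal) (u v : V) : ℝ≥0∞ :=
  ⨅ p : G.Walk u v, walkWeight wt p

/-- `G` has unique shortest paths: for every pair of connected vertices there is exactly
one walk of minimum total weight. -/
def HasUniqueShortestPaths (G : SimpleGraph V) (wt : Sym2 V → NNReal) : Prop :=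
  ∀ u v : V, G.Reachable u v →
    ∃! p : G.Walk u v, walkWeight wt p = wdist G wt u v

open SimpleGraph

section Aux

variable {G : SimpleGraph V} {wt : Sym2 V → NNReal}

lemma walkWeight_cons {u v w : V} (h : G.Adj u v) (p : G.Walk v w) :
    walkWeight wt (Walk.cons h p) = (wt s(u, v) : ℝ≥0∞) + walkWeight wt p := by
  simp [walkWeight]

lemma walkWeight_append {u v w : V} (p : G.Walk u v) (q : G.Walk v w) :
    walkWeight wt (p.append q) = walkWeight wt p + walkWeight wt q := by
  simp [walkWeight]

lemma walkWeight_reverse {u v : V} (p : G.Walk u v) :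
    walkWeight wt p.reverse = walkWeight wt p := by
  simp [walkWeight, List.sum_reverse]

lemma walkWeight_ne_top {u v : V} (p : G.Walk u v) : walkWeight wt p ≠ ⊤ := by
  induction p with
  | nil => simp [walkWeight]
  | cons h q ih =>
      rw [walkWeight_cons]
      exact ENNReal.add_ne_top.2 ⟨ENNReal.coe_ne_top, ih⟩

lemma wdist_le {u v : V} (p : G.Walk u v) : wdist G wt u v ≤ walkWeight wt p :=
  iInf_le _ _

lemma wdist_symm (u v : V) : wdist G wt u v = wdist G wt v u := by
  have h : ∀ a b : V, wdist G wt a b ≤ wdist G wt b a := fun a b =>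
    le_iInf fun p => (wdist_le p.reverse).trans (walkWeight_reverse p).le
  exact le_antisymm (h u v) (h v u)

lemma wdist_triangle (u v w : V) :
    wdist G wt u w ≤ wdist G wt u v + wdist G wt v w := by
  simp only [wdist]
  rw [ENNReal.iInf_add]
  refine le_iInf fun p => ?_
  rw [ENNReal.add_iInf]
  refine le_iInf fun q => ?_
  exact (iInf_le _ (p.append q)).trans (walkWeight_append p q).le

lemma reachable_of_wdist_lt_top {u v : V} (h : wdist G wt u v < ⊤) :
    G.Reachable u v := by
  by_contra hn
  have : IsEmpty (G.Walk u v) := ⟨fun p => hn ⟨p⟩⟩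
  rw [wdist, iInf_of_empty] at h
  exact lt_irrefl _ h

lemma walkWeight_bypass_le [DecidableEq V] {u v : V} (p : G.Walk u v) :
    walkWeight wt p.bypass ≤ walkWeight wt p := by
  have hsub : List.Subperm p.bypass.edges p.edges :=
    (p.bypass_isPath.edges_nodup).subperm p.edges_bypass_subset
  have hms : (p.bypass.edges : Multiset (Sym2 V)) ≤ (p.edges : Multiset (Sym2 V)) :=
    Multiset.coe_le.2 hsub
  have hmap := Multiset.map_le_map (f := fun e => (wt e : ℝ≥0∞)) hms
  obtain ⟨z, hz⟩ := Multiset.le_iff_exists_add.1 hmap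
  have hkey : walkWeight wt p = walkWeight wt p.bypass + z.sum := by
    have := congrArg Multiset.sum hz
    simpa [walkWeight] using this
  rw [hkey]
  exact le_self_add

lemma isPath_of_walkWeight_eq [DecidableEq V] (huniq : HasUniqueShortestPaths G wt)
    {u v : V} (p : G.Walk u v) (hp : walkWeight wt p = wdist G wt u v) : p.IsPath := by
  obtain ⟨q, _, hq⟩ := huniq u v ⟨p⟩
  have hb : walkWeight wt p.bypass = wdist G wt u v :=
    le_antisymm ((walkWeight_bypass_le p).trans hp.le) (wdist_le _)
  have heq : p = p.bypass := (hq p hp).trans (hq p.bypass hb).symm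
  rw [heq]
  exact p.bypass_isPath

/-- Splitting a minimum-weight walk: each part is minimum. -/
lemma split_min {u a v : V} (p : G.Walk u a) (q : G.Walk a v)
    (h : walkWeight wt (p.append q) = wdist G wt u v) :
    walkWeight wt p = wdist G wt u a ∧ walkWeight wt q = wdist G wt a v := by
  rw [walkWeight_append] at h
  constructor
  · refine le_antisymm ?_ (wdist_le p)
    by_contra hlt
    push_neg at hlt
    obtain ⟨r, hr⟩ := iInf_lt_iff.1 hlt
    have h1 : wdist G wt u v ≤ walkWeight wt (r.append q) := wdist_le _
    rw [walkWeight_append] at h1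
    have h2 : walkWeight wt r + walkWeight wt q < walkWeight wt p + walkWeight wt q :=
      ENNReal.add_lt_add_right (walkWeight_ne_top q) hr
    rw [h] at h2
    exact absurd (h1.trans_lt h2) (lt_irrefl _)
  · refine le_antisymm ?_ (wdist_le q)
    by_contra hlt
    push_neg at hlt
    obtain ⟨r, hr⟩ := iInf_lt_iff.1 hlt
    have h1 : wdist G wt u v ≤ walkWeight wt (p.append r) := wdist_le _
    rw [walkWeight_append] at h1
    have h2 : walkWeight wt p + walkWeight wt r < walkWeight wt p + walkWeight wt q :=
      ENNReal.add_lt_add_left (walkWeight_ne_top p) hr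
    rw [h] at h2
    exact absurd (h1.trans_lt h2) (lt_irrefl _)

/-- Decompose a trail at an edge it contains. -/
lemma decomp_at_edge {f : Sym2 V} {u v : V} (p : G.Walk u v)
    (hnd : p.edges.Nodup) (hfp : f ∈ p.edges) :
    ∃ (a b : V) (hab : G.Adj a b) (p1 : G.Walk u a) (p2 : G.Walk b v),
      p = p1.append (Walk.cons hab p2) ∧ f = s(a, b) ∧ f ∉ p1.edges ∧ f ∉ p2.edges := by
  induction p with
  | nil => simp at hfp
  | @cons x y w h q ih =>
      rw [Walk.edges_cons] at hfp hnd
      rcases List.mem_cons.1 hfp with heq | hmem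
      · exact ⟨x, y, h, Walk.nil, q, by simp, heq, by simp,
          heq ▸ (List.nodup_cons.1 hnd).1⟩
      · obtain ⟨a, b, hab, p1, p2, hdecomp, hfeq, hf1, hf2⟩ :=
          ih (List.nodup_cons.1 hnd).2 hmem
        refine ⟨a, b, hab, Walk.cons h p1, p2, ?_, hfeq, ?_, hf2⟩
        · rw [Walk.cons_append, hdecomp]
        · rw [Walk.edges_cons, List.mem_cons]
          rintro (heq2 | hc)
          · exact (List.nodup_cons.1 hnd).1 (heq2 ▸ hmem)
          · exact hf1 hc

lemma wdist_deleteEdges_le_of_avoid {f : Sym2 V} {u v : V} (p : G.Walk u v)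
    (hfp : f ∉ p.edges) :
    wdist (G.deleteEdges {f}) wt u v ≤ walkWeight wt p := by
  have h : ∀ e ∈ p.edges, e ∈ (G.deleteEdges {f}).edgeSet := by
    intro e he
    rw [SimpleGraph.edgeSet_deleteEdges]
    exact ⟨p.edges_subset_edgeSet he, fun hc => hfp (Set.mem_singleton_iff.1 hc ▸ he)⟩
  have hle := wdist_le (wt := wt) (p.transfer _ h)
  rwa [show walkWeight wt (p.transfer _ h) = walkWeight wt p by
    simp [walkWeight, Walk.edges_transfer]] at hle

lemma wdist_le_wdist_deleteEdges {es : Set (Sym2 V)} (u v : V) :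
    wdist G wt u v ≤ wdist (G.deleteEdges es) wt u v := by
  refine le_iInf fun p => ?_
  have h : ∀ e ∈ p.edges, e ∈ G.edgeSet := by
    intro e he
    have h2 := p.edges_subset_edgeSet he
    rw [SimpleGraph.edgeSet_deleteEdges] at h2
    exact h2.1
  have hle := wdist_le (wt := wt) (p.transfer G h)
  rwa [show walkWeight wt (p.transfer G h) = walkWeight wt p by
    simp [walkWeight, Walk.edges_transfer]] at hle

end Aux

theorem stmt10 [Fintype V] [DecidableEq V] (G : SimpleGraph V) (wt : Sym2 V → NNReal)
    (hwt : ∀ e ∈ G.edgeSet, 0 < wt e)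
    (huniq : HasUniqueShortestPaths G wt)
    (s v t : V) (hvt : wdist G wt v t ≤ wdist G wt v s)
    (f : Sym2 V) (hf : f ∈ G.edgeSet)
    (qsv : G.Walk s v) (hqsv : walkWeight wt qsv = wdist G wt s v)
    (hfq : f ∈ qsv.edges)
    (hconn : (G.deleteEdges {f}).Reachable s v) :
    wdist (G.deleteEdges {f}) wt s t + wdist (G.deleteEdges {f}) wt v t ≤
      5 * wdist (G.deleteEdges {f}) wt s v := by
  set G' := G.deleteEdges {f} with hG'
  set D := wdist G' wt s v with hD
  have hsvG : wdist G wt s v ≤ D := wdist_le_wdist_deleteEdges s v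
  have hvs : wdist G wt v s = wdist G wt s v := wdist_symm v s
  have hvtD : wdist G wt v t ≤ D := by
    calc wdist G wt v t ≤ wdist G wt v s := hvt
      _ = wdist G wt s v := hvs
      _ ≤ D := hsvG
  have hvt_lt : wdist G wt v t < ⊤ := by
    calc wdist G wt v t ≤ wdist G wt v s := hvt
      _ = wdist G wt s v := hvs
      _ = walkWeight wt qsv := hqsv.symm
      _ < ⊤ := lt_top_iff_ne_top.2 (walkWeight_ne_top qsv)
  obtain ⟨p, hp, -⟩ := huniq v t (reachable_of_wdist_lt_top hvt_lt)
  have hppath : p.IsPath := isPath_of_walkWeight_eq huniq p hp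
  have hqpath : qsv.IsPath := isPath_of_walkWeight_eq huniq qsv hqsv
  have hG'vs : wdist G' wt v s = D := wdist_symm v s
  by_cases hfp : f ∈ p.edges
  · -- The shortest path from v to t in G uses f.
    obtain ⟨a, b, hab, q1, q2, hqd, hfab, hfq1, hfq2⟩ :=
      decomp_at_edge qsv hqpath.edges_nodup hfq
    obtain ⟨x, y, hxy, p1, p2, hpd, hfxy, hfp1, hfp2⟩ :=
      decomp_at_edge p hppath.edges_nodup hfp
    have hxyab : (x = a ∧ y = b) ∨ (x = b ∧ y = a) := by
      have h := hfxy.symm.trans hfab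
      rwa [Sym2.eq_iff] at h
    rcases hxyab with ⟨rfl, rfl⟩ | ⟨rfl, rfl⟩
    · -- impossible by uniqueness of shortest paths
      exfalso
      have hmin := (split_min q1 (Walk.cons hab q2) (hqd ▸ hqsv)).2
      have hminp := (split_min p1 (Walk.cons hxy p2) (hpd ▸ hp)).1
      have hrev : walkWeight wt p1.reverse = wdist G wt x v := by
        rw [walkWeight_reverse, hminp, wdist_symm]
      obtain ⟨r, -, hr⟩ := huniq x v ⟨Walk.cons hab q2⟩
      have he : Walk.cons hab q2 = p1.reverse := (hr _ hmin).trans (hr _ hrev).symm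
      have hfin : f ∈ (Walk.cons hab q2).edges := by
        rw [Walk.edges_cons, hfab]
        exact List.mem_cons_self
      rw [he, Walk.edges_reverse, List.mem_reverse] at hfin
      exact hfp1 hfin
    · -- the good case: q1 : s → a avoids f, p2 : a → t avoids f
      have hq1w : walkWeight wt q1 ≤ wdist G wt s v := by
        rw [← hqsv, hqd, walkWeight_append]
        exact le_self_add
      have hp2w : walkWeight wt p2 ≤ wdist G wt v t := by
        rw [← hp, hpd, walkWeight_append, walkWeight_cons]
        calc walkWeight wt p2 ≤ (wt s(x, y) : ℝ≥0∞) + walkWeight wt p2 := le_add_self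
          _ ≤ walkWeight wt p1 + ((wt s(x, y) : ℝ≥0∞) + walkWeight wt p2) := le_add_self
      have hsa : wdist G' wt s y ≤ D :=
        (wdist_deleteEdges_le_of_avoid q1 hfq1).trans (hq1w.trans hsvG)
      have hat : wdist G' wt y t ≤ D :=
        (wdist_deleteEdges_le_of_avoid p2 hfp2).trans (hp2w.trans hvtD)
      have hst : wdist G' wt s t ≤ D + D :=
        (wdist_triangle s y t).trans (add_le_add hsa hat)
      have hvt' : wdist G' wt v t ≤ D + (D + D) := by
        calc wdist G' wt v t ≤ wdist G' wt v s + wdist G' wt s t := wdist_triangle v s t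
          _ ≤ D + (D + D) := add_le_add hG'vs.le hst
      calc wdist G' wt s t + wdist G' wt v t ≤ (D + D) + (D + (D + D)) :=
            add_le_add hst hvt'
        _ = 5 * D := by ring
  · -- The shortest path from v to t in G avoids f.
    have h1 : wdist G' wt v t ≤ D :=
      (wdist_deleteEdges_le_of_avoid p hfp).trans (hp.le.trans hvtD)
    have h2 : wdist G' wt s t ≤ D + D :=
      (wdist_triangle s v t).trans (add_le_add le_rfl h1)
    calc wdist G' wt s t + wdist G' wt v t ≤ (D + D) + D := add_le_add h2 h1
      _ ≤ 5 * D := by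
        rw [show (5 : ℝ≥0∞) * D = ((D + D) + D) + (D + D) by ring]
        exact le_self_add
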